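/- Let a ≥ 0, λ > 0, and suppose f ∈ H³(-1,0) satisfies f''' + (a - λ) f' = g with f(-1) = f(0) = f'(0) = 0, for some g ∈ L²(-1,0). Then (3/2) λ ∫_{-1}^0 |f'(x)|² dx + (λ - a)(λ/2) ∫_{-1}^0 |f(x)|² dx = λ ∫_{-1}^0 (x+1) f(x) g(x) dx. -/

import Mathlib

open MeasureTheory

theorem multiplier_identity_one (a lam : ℝ) (ha : 0 ≤ a) (hlam : 0 < lam)
    (f g : ℝ → ℝ) (hf : ContDiff ℝ 3 f) (hg : Continuous g)
    (heq : ∀ x ∈ Set.Icc (-1:ℝ) 0,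
      iteratedDeriv 3 f x + (a - lam) * deriv f x = g x)
    (hb1 : f (-1) = 0) (hb2 : f 0 = 0) (hb3 : deriv f 0 = 0) :
    (3/2) * lam * (∫ x in (-1:ℝ)..0, (deriv f x)^2) +
      (lam - a) * (lam / 2) * (∫ x in (-1:ℝ)..0, (f x)^2) =
    lam * (∫ x in (-1:ℝ)..0, (x + 1) * f x * g x) := by
  have hfd : Differentiable ℝ f := hf.differentiable (by norm_num)
  have hc2 : ContDiff ℝ 2 (deriv f) := by
    have h3 : ContDiff ℝ ((2:ℕ) + 1) f := by exact_mod_cast hf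
    exact_mod_cast (contDiff_succ_iff_deriv.mp h3).2.2
  have hc1 : ContDiff ℝ 1 (deriv (deriv f)) := by
    have h2 : ContDiff ℝ ((1:ℕ) + 1) (deriv f) := by exact_mod_cast hc2
    exact_mod_cast (contDiff_succ_iff_deriv.mp h2).2.2
  have hf1d : Differentiable ℝ (deriv f) := hc2.differentiable (by norm_num)
  have hf2d : Differentiable ℝ (deriv (deriv f)) := hc1.differentiable (by norm_num)
  have hf3c : Continuous (deriv (deriv (deriv f))) := hc1.continuous_deriv le_rfl
  have it3 : iteratedDeriv 3 f = deriv (deriv (deriv f)) := by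
    rw [show (3:ℕ) = 1 + 1 + 1 from rfl, iteratedDeriv_succ, iteratedDeriv_succ,
      iteratedDeriv_one]
  set F : ℝ → ℝ := fun x => (x+1) * f x * deriv (deriv f) x - f x * deriv f x
      - (x+1) * (deriv f x * deriv f x) / 2 + (a - lam) * ((x+1) * (f x * f x) / 2)
    with hF
  have hder : ∀ x : ℝ, HasDerivAt F
      ((x+1) * f x * (deriv (deriv (deriv f)) x + (a - lam) * deriv f x)
        - (3/2) * (deriv f x)^2 - (lam - a)/2 * (f x)^2) x := by
    intro x
    have h1 : HasDerivAt (fun x : ℝ => x + 1) 1 x := (hasDerivAt_id x).add_const 1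
    have hfx : HasDerivAt f (deriv f x) x := (hfd x).hasDerivAt
    have hf1x : HasDerivAt (deriv f) (deriv (deriv f) x) x := (hf1d x).hasDerivAt
    have hf2x : HasDerivAt (deriv (deriv f)) (deriv (deriv (deriv f)) x) x :=
      (hf2d x).hasDerivAt
    have hA := (h1.mul hfx).mul hf2x
    have hB := hfx.mul hf1x
    have hC := ((h1.mul (hf1x.mul hf1x))).div_const 2
    have hD := (((h1.mul (hfx.mul hfx))).div_const 2).const_mul (a - lam)
    have := ((hA.sub hB).sub hC).add hD
    refine this.congr_deriv ?_
    simp only [Pi.mul_apply]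
    ring
  have hcf : Continuous f := hf.continuous
  have hc1f : Continuous (deriv f) := hc2.continuous
  have hφint : IntervalIntegrable
      (fun x => (x+1) * f x * g x - (3/2) * (deriv f x)^2 - (lam - a)/2 * (f x)^2)
      volume (-1) 0 := by
    apply Continuous.intervalIntegrable
    exact ((((continuous_id.add continuous_const).mul hcf).mul hg).sub
      (continuous_const.mul (hc1f.pow 2))).sub (continuous_const.mul (hcf.pow 2))
  have key : (∫ x in (-1:ℝ)..0,
      ((x+1) * f x * g x - (3/2) * (deriv f x)^2 - (lam - a)/2 * (f x)^2))
      = F 0 - F (-1) := by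
    apply intervalIntegral.integral_eq_sub_of_hasDerivAt
    · intro x hx
      rw [Set.uIcc_of_le (by norm_num : (-1:ℝ) ≤ 0)] at hx
      have := hder x
      rw [← it3, heq x hx] at this
      exact this
    · exact hφint
  have hF0 : F 0 - F (-1) = 0 := by
    simp only [hF, hb1, hb2, hb3]
    ring
  rw [hF0] at key
  have i1 : IntervalIntegrable (fun x => (x+1) * f x * g x) volume (-1) 0 :=
    (((continuous_id.add continuous_const).mul hcf).mul hg).intervalIntegrable _ _
  have i2 : IntervalIntegrable (fun x => (3/2) * (deriv f x)^2) volume (-1) 0 :=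
    (continuous_const.mul (hc1f.pow 2)).intervalIntegrable _ _
  have i3 : IntervalIntegrable (fun x => (lam - a)/2 * (f x)^2) volume (-1) 0 :=
    (continuous_const.mul (hcf.pow 2)).intervalIntegrable _ _
  rw [intervalIntegral.integral_sub (i1.sub i2) i3,
      intervalIntegral.integral_sub i1 i2,
      intervalIntegral.integral_const_mul, intervalIntegral.integral_const_mul] at key
  linear_combination (-lam) * key
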